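/- Let X be a set, F a nonempty finite set of functions X → ℝ, f* ∈ F, T ≥ 1 an integer, and x^(1),…,x^(T) ∈ X a fixed sequence. Let ε^(1),…,ε^(T) be independent standard Gaussian random variables (mean 0, variance 1) and set y^(t) := f*(x^(t)) + ε^(t). Let f̂ be any minimizer over f ∈ F of the empirical square loss ∑_{t=1}^{T} (f(x^(t)) − y^(t))² (a measurable selection of the empirical risk minimizer). Then for every δ ∈ (0,1), with probability at least 1 − δ, ∑_{t=1}^{T} (f̂(x^(t)) − f*(x^(t)))² ≤ 8·log(|F|/δ), where log denotes the natural logarithm. -/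

import Mathlib

open MeasureTheory ProbabilityTheory

open scoped NNReal ENNReal

lemma gauss_pdf_key (a x : ℝ) :
    gaussianPDFReal 0 1 x * Real.exp (a * x)
      = Real.exp (a ^ 2 / 2) * gaussianPDFReal a 1 x := by
  simp only [gaussianPDFReal, NNReal.coe_one, mul_one, sub_zero]
  rw [mul_assoc, ← Real.exp_add, mul_comm (Real.exp (a ^ 2 / 2)), mul_assoc, ← Real.exp_add]
  congr 1
  ring_nf

lemma integrable_exp_gaussian (a : ℝ) :
    Integrable (fun x => Real.exp (a * x)) (gaussianReal 0 1) := by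
  rw [gaussianReal_of_var_ne_zero 0 one_ne_zero]
  rw [show (gaussianPDF 0 1)
      = fun x => ((Real.toNNReal (gaussianPDFReal 0 1 x) : ℝ≥0) : ℝ≥0∞) from rfl]
  rw [integrable_withDensity_iff_integrable_coe_smul
    ((measurable_gaussianPDFReal 0 1).real_toNNReal)]
  have h : (fun x => ((Real.toNNReal (gaussianPDFReal 0 1 x) : ℝ)) • Real.exp (a * x))
      = fun x => Real.exp (a ^ 2 / 2) * gaussianPDFReal a 1 x := by
    funext x
    rw [smul_eq_mul, Real.coe_toNNReal _ (gaussianPDFReal_nonneg 0 1 x), gauss_pdf_key]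
  rw [h]
  exact (integrable_gaussianPDFReal a 1).const_mul _

lemma integral_exp_gaussian (a : ℝ) :
    ∫ x, Real.exp (a * x) ∂(gaussianReal 0 1) = Real.exp (a ^ 2 / 2) := by
  rw [gaussianReal_of_var_ne_zero 0 one_ne_zero]
  rw [show (gaussianPDF 0 1)
      = fun x => ((Real.toNNReal (gaussianPDFReal 0 1 x) : ℝ≥0) : ℝ≥0∞) from rfl]
  rw [integral_withDensity_eq_integral_smul ((measurable_gaussianPDFReal 0 1).real_toNNReal)]
  have h : ∀ x, (Real.toNNReal (gaussianPDFReal 0 1 x)) • Real.exp (a * x)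
      = Real.exp (a ^ 2 / 2) * gaussianPDFReal a 1 x := by
    intro x
    rw [NNReal.smul_def, smul_eq_mul, Real.coe_toNNReal _ (gaussianPDFReal_nonneg 0 1 x),
      gauss_pdf_key]
  simp only [h]
  rw [integral_const_mul, integral_gaussianPDFReal_eq_one a one_ne_zero, mul_one]

lemma exp_integrable {Ω : Type*} [MeasurableSpace Ω] (P : Measure Ω)
    {e : Ω → ℝ} (he : AEMeasurable e P) (hmap : Measure.map e P = gaussianReal 0 1) (a : ℝ) :
    Integrable (fun ω => Real.exp (a * e ω)) P := by
  have hg : AEStronglyMeasurable (fun x => Real.exp (a * x)) (Measure.map e P) :=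
    ((measurable_const_mul a).exp).aestronglyMeasurable
  have h := (integrable_map_measure hg he).mp (by rw [hmap]; exact integrable_exp_gaussian a)
  exact h

lemma exp_integral {Ω : Type*} [MeasurableSpace Ω] (P : Measure Ω)
    {e : Ω → ℝ} (he : AEMeasurable e P) (hmap : Measure.map e P = gaussianReal 0 1) (a : ℝ) :
    ∫ ω, Real.exp (a * e ω) ∂P = Real.exp (a ^ 2 / 2) := by
  have hg : AEStronglyMeasurable (fun x => Real.exp (a * x)) (Measure.map e P) :=
    ((measurable_const_mul a).exp).aestronglyMeasurable
  rw [show ∫ ω, Real.exp (a * e ω) ∂P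
      = ∫ y, Real.exp (a * y) ∂(Measure.map e P) from (integral_map he hg).symm,
    hmap, integral_exp_gaussian]

lemma iIndepFun_ae_congr {Ω : Type*} [MeasurableSpace Ω] {μ : Measure Ω} {n : ℕ}
    {f g : Fin n → Ω → ℝ}
    (h : iIndepFun f μ) (hfg : ∀ i, f i =ᵐ[μ] g i) :
    iIndepFun g μ := by
  rw [iIndepFun_iff_measure_inter_preimage_eq_mul] at h ⊢
  intro S sets hsets
  have h1 := h S hsets
  have hset : ∀ i : Fin n, ∀ A : Set ℝ, μ (g i ⁻¹' A) = μ (f i ⁻¹' A) := by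
    intro i A
    refine measure_congr (Filter.eventuallyEq_set.mpr ?_)
    filter_upwards [hfg i] with ω hω
    simp [Set.mem_preimage, hω]
  have hInter : μ (⋂ i ∈ S, g i ⁻¹' sets i) = μ (⋂ i ∈ S, f i ⁻¹' sets i) := by
    refine measure_congr (Filter.eventuallyEq_set.mpr ?_)
    have hall : ∀ᵐ ω ∂μ, ∀ i, f i ω = g i ω := ae_all_iff.mpr hfg
    filter_upwards [hall] with ω hω
    simp only [Set.mem_iInter, Set.mem_preimage, hω]
  rw [hInter, h1]
  exact Finset.prod_congr rfl fun i _ => (hset i _).symm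

lemma chernoff_aux {Ω : Type*} [MeasurableSpace Ω] (P : Measure Ω) [IsProbabilityMeasure P]
    {n : ℕ} (e : Fin n → Ω → ℝ) (he : ∀ t, Measurable (e t))
    (hmap : ∀ t, Measure.map (e t) P = gaussianReal 0 1)
    (hindep : iIndepFun e P)
    (c : Fin n → ℝ) (s : ℝ) (hs : 0 ≤ s) :
    P {ω | Real.sqrt (∑ t, c t ^ 2) * s < ∑ t, c t * e t ω}
      ≤ ENNReal.ofReal (Real.exp (-(s ^ 2) / 2)) := by
  classical
  set V := ∑ t, c t ^ 2 with hVdef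
  have hVnn : 0 ≤ V := Finset.sum_nonneg fun t _ => sq_nonneg _
  rcases eq_or_lt_of_le hVnn with hV0 | hVpos
  · have hc0 : ∀ t, c t = 0 := fun t =>
      pow_eq_zero_iff two_ne_zero |>.mp
        ((Finset.sum_eq_zero_iff_of_nonneg (fun t _ => sq_nonneg (c t))).mp hV0.symm t
          (Finset.mem_univ t))
    have hempty : {ω | Real.sqrt V * s < ∑ t, c t * e t ω} = ∅ := by
      ext ω
      simp only [Set.mem_setOf_eq, Set.mem_empty_iff_false, iff_false, not_lt]
      have h0 : ∑ t, c t * e t ω = 0 := Finset.sum_eq_zero fun t _ => by rw [hc0 t, zero_mul]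
      rw [h0]
      positivity
    rw [hempty]
    simp
  · set lam := s / Real.sqrt V with hlamdef
    have hsV : 0 < Real.sqrt V := Real.sqrt_pos.mpr hVpos
    have hlam : 0 ≤ lam := div_nonneg hs hsV.le
    set Y : Fin n → Ω → ℝ := fun t ω => c t * e t ω with hYdef
    have hYmeas : ∀ t, Measurable (Y t) := fun t => (he t).const_mul _
    have hYindep : iIndepFun Y P := by
      have h2 := hindep.comp (fun t v => c t * v) (fun t => measurable_const_mul _)
      have h3 : (fun i => (fun v => c i * v) ∘ e i) = Y := by funext i ω; rfl
      rwa [h3] at h2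
    have hYint : ∀ t, Integrable (fun ω => Real.exp (lam * Y t ω)) P := by
      intro t
      have h4 : (fun ω => Real.exp (lam * Y t ω))
          = fun ω => Real.exp ((lam * c t) * e t ω) := by
        funext ω
        congr 1
        show lam * (c t * e t ω) = (lam * c t) * e t ω
        ring
      rw [h4]
      exact exp_integrable P (he t).aemeasurable (hmap t) _
    have hsum_int : Integrable (fun ω => Real.exp (lam * (∑ t, Y t) ω)) P :=
      iIndepFun.integrable_exp_mul_sum hYindep hYmeas (fun t _ => hYint t)
    have hmgf : mgf (∑ t, Y t) P lam = Real.exp (lam ^ 2 * V / 2) := by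
      rw [iIndepFun.mgf_sum hYindep hYmeas]
      have h5 : ∀ t, mgf (Y t) P lam = Real.exp ((lam * c t) ^ 2 / 2) := by
        intro t
        have h4 : (fun ω => Real.exp (lam * Y t ω))
            = fun ω => Real.exp ((lam * c t) * e t ω) := by
          funext ω
          congr 1
          show lam * (c t * e t ω) = (lam * c t) * e t ω
          ring
        show ∫ ω, Real.exp (lam * Y t ω) ∂P = _
        rw [h4]
        exact exp_integral P (he t).aemeasurable (hmap t) _
      rw [Finset.prod_congr rfl fun t _ => h5 t, ← Real.exp_sum]
      congr 1
      rw [← Finset.sum_div]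
      congr 1
      simp_rw [mul_pow]
      rw [hVdef, Finset.mul_sum]
    have hch := measure_ge_le_exp_mul_mgf (μ := P) (X := ∑ t, Y t) (Real.sqrt V * s) hlam hsum_int
    rw [hmgf] at hch
    have harith : Real.exp (-lam * (Real.sqrt V * s)) * Real.exp (lam ^ 2 * V / 2)
        = Real.exp (-(s ^ 2) / 2) := by
      rw [← Real.exp_add]
      congr 1
      have hV : Real.sqrt V ^ 2 = V := Real.sq_sqrt hVnn
      have h6 : lam * Real.sqrt V = s := by
        rw [hlamdef, div_mul_cancel₀ _ hsV.ne']
      have hl2 : lam ^ 2 * V = s ^ 2 := by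
        rw [hlamdef, div_pow, hV, div_mul_cancel₀ _ hVpos.ne']
      calc -lam * (Real.sqrt V * s) + lam ^ 2 * V / 2
          = -(lam * Real.sqrt V) * s + (lam ^ 2 * V) / 2 := by ring
        _ = -(s ^ 2) / 2 := by rw [h6, hl2]; ring
    rw [harith] at hch
    have hsub2 : {ω | Real.sqrt V * s < ∑ t, c t * e t ω}
        ⊆ {ω | Real.sqrt V * s ≤ (∑ t, Y t) ω} := by
      intro ω hω
      simp only [Set.mem_setOf_eq, Finset.sum_apply] at *
      exact le_of_lt hω
    refine (measure_mono hsub2).trans ?_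
    rw [← ENNReal.ofReal_toReal (measure_ne_top P _)]
    exact ENNReal.ofReal_le_ofReal hch

/-- Fixed-design guarantee for empirical risk minimization in well-specified
square-loss regression with i.i.d. standard Gaussian noise: with probability at least `1 − δ`,
`∑_t (f̂(x^(t)) − f*(x^(t)))² ≤ 8 log(|F|/δ)`.  The rounds are indexed by `Fin T`, the noise
variables `ε t` are independent with law `N(0,1)`, the outcomes are `y t = f*(x t) + ε t`, and
`f̂` is any (pointwise) minimizer over `F` of the empirical square loss. -/
theorem erm_offline_guarantee {X Ω : Type*} [MeasurableSpace Ω]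
    (P : Measure Ω) [IsProbabilityMeasure P]
    (F : Finset (X → ℝ)) (hF : F.Nonempty)
    (fstar : X → ℝ) (hfstar : fstar ∈ F)
    (T : ℕ) (hT : 1 ≤ T) (x : Fin T → X)
    (ε : Fin T → Ω → ℝ)
    (hIndep : iIndepFun ε P)
    (hGauss : ∀ t, Measure.map (ε t) P = gaussianReal 0 1)
    (fhat : Ω → (X → ℝ))
    (hmem : ∀ ω, fhat ω ∈ F)
    (hERM : ∀ ω, ∀ f ∈ F,
      ∑ t, (fhat ω (x t) - (fstar (x t) + ε t ω)) ^ 2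
        ≤ ∑ t, (f (x t) - (fstar (x t) + ε t ω)) ^ 2)
    (δ : ℝ) (hδ : δ ∈ Set.Ioo (0 : ℝ) 1) :
    1 - δ ≤
      (P {ω | ∑ t, (fhat ω (x t) - fstar (x t)) ^ 2
        ≤ 8 * Real.log (F.card / δ)}).toReal := by
  classical
  obtain ⟨hδ0, hδ1⟩ := hδ
  have hcard0 : 0 < F.card := Finset.card_pos.mpr hF
  have hcard : (1 : ℝ) ≤ F.card := by exact_mod_cast hcard0
  set L := Real.log (F.card / δ) with hLdef
  have hL : 0 < L := Real.log_pos ((one_lt_div hδ0).mpr (lt_of_lt_of_le hδ1 hcard))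
  -- measurable versions of the noise
  have hAE : ∀ t, AEMeasurable (ε t) P := by
    intro t
    by_contra h
    have h0 : Measure.map (ε t) P = 0 := Measure.map_of_not_aemeasurable h
    rw [hGauss t] at h0
    exact (IsProbabilityMeasure.ne_zero (gaussianReal 0 1)) h0
  set e : Fin T → Ω → ℝ := fun t => (hAE t).mk (ε t) with heDef
  have he_meas : ∀ t, Measurable (e t) := fun t => (hAE t).measurable_mk
  have he_ae : ∀ t, ε t =ᵐ[P] e t := fun t => (hAE t).ae_eq_mk
  have he_map : ∀ t, Measure.map (e t) P = gaussianReal 0 1 := fun t => by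
    rw [← Measure.map_congr (he_ae t), hGauss t]
  have he_indep : iIndepFun e P := iIndepFun_ae_congr hIndep he_ae
  -- the good event
  set E : Set Ω := {ω | (∀ t, ε t ω = e t ω) ∧ ∀ f ∈ F,
      ∑ t, (f (x t) - fstar (x t)) * e t ω
        ≤ Real.sqrt (∑ t, (f (x t) - fstar (x t)) ^ 2) * Real.sqrt (2 * L)} with hEdef
  -- the good event implies the conclusion
  have hsub : E ⊆ {ω | ∑ t, (fhat ω (x t) - fstar (x t)) ^ 2 ≤ 8 * L} := by
    rintro ω ⟨hεe, hgood⟩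
    set g := fhat ω with hg
    set V := ∑ t, (g (x t) - fstar (x t)) ^ 2 with hVdef
    have hVnn : 0 ≤ V := Finset.sum_nonneg fun t _ => sq_nonneg _
    have hERM' := hERM ω fstar hfstar
    have h1 : ∀ t : Fin T, (g (x t) - (fstar (x t) + ε t ω)) ^ 2
        = (g (x t) - fstar (x t)) ^ 2 - 2 * ((g (x t) - fstar (x t)) * ε t ω)
          + (ε t ω) ^ 2 := fun t => by ring
    have h2 : ∀ t : Fin T, (fstar (x t) - (fstar (x t) + ε t ω)) ^ 2 = (ε t ω) ^ 2 :=
      fun t => by ring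
    rw [Finset.sum_congr rfl (fun t _ => h1 t), Finset.sum_congr rfl (fun t _ => h2 t),
      Finset.sum_add_distrib, Finset.sum_sub_distrib, ← Finset.mul_sum] at hERM'
    have hkey : V ≤ 2 * ∑ t, (g (x t) - fstar (x t)) * ε t ω := by
      rw [hVdef]; linarith
    have hS : ∑ t, (g (x t) - fstar (x t)) * ε t ω
        = ∑ t, (g (x t) - fstar (x t)) * e t ω :=
      Finset.sum_congr rfl fun t _ => by rw [hεe t]
    have hgood' := hgood g (hmem ω)
    have h2L : Real.sqrt (2 * L) ^ 2 = 2 * L := Real.sq_sqrt (by linarith)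
    have hVs : Real.sqrt V ^ 2 = V := Real.sq_sqrt hVnn
    show V ≤ 8 * L
    nlinarith [sq_nonneg (Real.sqrt V - 2 * Real.sqrt (2 * L)), Real.sqrt_nonneg V,
      Real.sqrt_nonneg (2 * L), hkey, hS, hgood']
  -- probability of the bad events
  have hchern : ∀ f : X → ℝ,
      P {ω | Real.sqrt (∑ t, (f (x t) - fstar (x t)) ^ 2) * Real.sqrt (2 * L)
          < ∑ t, (f (x t) - fstar (x t)) * e t ω}
        ≤ ENNReal.ofReal (δ / F.card) := by
    intro f
    have h := chernoff_aux P e he_meas he_map he_indep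
      (fun t => f (x t) - fstar (x t)) (Real.sqrt (2 * L)) (Real.sqrt_nonneg _)
    have hexp : Real.exp (-(Real.sqrt (2 * L) ^ 2) / 2) = δ / F.card := by
      rw [Real.sq_sqrt (by linarith : (0:ℝ) ≤ 2 * L)]
      have : -(2 * L) / 2 = -L := by ring
      rw [this, hLdef, Real.exp_neg, Real.exp_log (by positivity), inv_div]
    rwa [hexp] at h
  -- union bound
  have hN : P {ω | ¬ ∀ t, ε t ω = e t ω} = 0 := by
    have hall : ∀ᵐ ω ∂P, ∀ t, ε t ω = e t ω := ae_all_iff.mpr he_ae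
    exact hall
  have hEc : Eᶜ ⊆ {ω | ¬ ∀ t, ε t ω = e t ω} ∪
      ⋃ f ∈ F, {ω | Real.sqrt (∑ t, (f (x t) - fstar (x t)) ^ 2) * Real.sqrt (2 * L)
          < ∑ t, (f (x t) - fstar (x t)) * e t ω} := by
    intro ω hω
    rw [hEdef] at hω
    simp only [Set.mem_compl_iff, Set.mem_setOf_eq, not_and_or] at hω
    rcases hω with hω | hω
    · exact Or.inl hω
    · right
      push_neg at hω
      obtain ⟨f, hfF, hf⟩ := hω
      exact Set.mem_biUnion hfF (by exact hf)
  have hPEc : P Eᶜ ≤ ENNReal.ofReal δ := by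
    calc P Eᶜ ≤ P ({ω | ¬ ∀ t, ε t ω = e t ω} ∪
        ⋃ f ∈ F, {ω | Real.sqrt (∑ t, (f (x t) - fstar (x t)) ^ 2) * Real.sqrt (2 * L)
          < ∑ t, (f (x t) - fstar (x t)) * e t ω}) := measure_mono hEc
      _ ≤ P {ω | ¬ ∀ t, ε t ω = e t ω} +
          P (⋃ f ∈ F, {ω | Real.sqrt (∑ t, (f (x t) - fstar (x t)) ^ 2) * Real.sqrt (2 * L)
          < ∑ t, (f (x t) - fstar (x t)) * e t ω}) := measure_union_le _ _
      _ ≤ 0 + ∑ f ∈ F, ENNReal.ofReal (δ / F.card) := by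
          refine add_le_add (le_of_eq hN) ?_
          exact (measure_biUnion_finset_le _ _).trans
            (Finset.sum_le_sum fun f _ => hchern f)
      _ = (F.card : ℝ≥0∞) * ENNReal.ofReal (δ / F.card) := by
          rw [zero_add, Finset.sum_const, nsmul_eq_mul]
      _ = ENNReal.ofReal δ := by
          rw [← ENNReal.ofReal_natCast, ← ENNReal.ofReal_mul (by positivity)]
          congr 1
          rw [mul_div_cancel₀]
          exact ne_of_gt (by exact_mod_cast hcard0)
  have hPE : 1 - ENNReal.ofReal δ ≤ P E := by
    have h1 : (1 : ℝ≥0∞) ≤ P E + P Eᶜ := by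
      calc (1 : ℝ≥0∞) = P Set.univ := measure_univ.symm
        _ = P (E ∪ Eᶜ) := by rw [Set.union_compl_self]
        _ ≤ P E + P Eᶜ := measure_union_le _ _
    exact tsub_le_iff_right.mpr (h1.trans (add_le_add_right hPEc _))
  have hfinal : ENNReal.ofReal (1 - δ)
      ≤ P {ω | ∑ t, (fhat ω (x t) - fstar (x t)) ^ 2 ≤ 8 * L} := by
    have h3 : ENNReal.ofReal (1 - δ) = 1 - ENNReal.ofReal δ := by
      rw [ENNReal.ofReal_sub _ hδ0.le, ENNReal.ofReal_one]
    rw [h3]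
    exact hPE.trans (measure_mono hsub)
  calc 1 - δ = (ENNReal.ofReal (1 - δ)).toReal := by
        rw [ENNReal.toReal_ofReal (by linarith)]
    _ ≤ _ := ENNReal.toReal_mono (measure_ne_top P _) hfinal
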